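/- Let n ≥ 1 and let F ⊆ ℕⁿ be a nonempty finite set. For a ∈ [0,∞)ⁿ set m(a) = min_{ν∈F} ⟨a,ν⟩ and s(a) = a₁ + ⋯ + aₙ. Then for every real k > 0, sup { m(a) − s(a) : a ∈ [0,∞)ⁿ, m(a) ≤ k } = k · Le, where Le = max(0, sup { 1 − s(a)/m(a) : a ∈ [0,∞)ⁿ, m(a) > 0 }) (the inner supremum over the empty set being taken as 0). -/

import Mathlib

lemma inf'_mul_left_aux {ι : Type*} (s : Finset ι) (hs : s.Nonempty) (g : ι → ℝ) (t : ℝ)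
    (ht : 0 ≤ t) : s.inf' hs (fun i => t * g i) = t * s.inf' hs g := by
  induction hs using Finset.Nonempty.cons_induction with
  | singleton a => rfl
  | cons a s ha hs ih =>
    rw [Finset.inf'_cons hs, Finset.inf'_cons hs, ih,
      mul_min_of_nonneg _ _ ht]

/-- `sup { h(a) : a ∈ R_k } = k · Le(f)`: for every `k > 0`, the supremum of
`m(a) - s(a)` over nonnegative `a` with `m(a) ≤ k` equals `k` times the leading
exponent `max (0, sup { 1 - s(a)/m(a) : m(a) > 0 })`. -/
theorem sup_h_on_Rk_eq_k_mul_leadingExponent (n : ℕ) (hn : 1 ≤ n)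
    (F : Finset (Fin n → ℕ)) (hF : F.Nonempty) (k : ℝ) (hk : 0 < k) :
    sSup {h : ℝ | ∃ a : Fin n → ℝ, (∀ i, 0 ≤ a i) ∧
        (F.inf' hF fun ν => ∑ i, a i * (ν i : ℝ)) ≤ k ∧
        h = (F.inf' hF fun ν => ∑ i, a i * (ν i : ℝ)) - ∑ i, a i} =
      k * max 0 (sSup {x : ℝ | ∃ a : Fin n → ℝ, (∀ i, 0 ≤ a i) ∧
        0 < (F.inf' hF fun ν => ∑ i, a i * (ν i : ℝ)) ∧
        x = 1 - (∑ i, a i) / (F.inf' hF fun ν => ∑ i, a i * (ν i : ℝ))}) := by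
  set M : (Fin n → ℝ) → ℝ := fun a => F.inf' hF fun ν => ∑ i, a i * (ν i : ℝ) with hM
  set S1 : Set ℝ := {h : ℝ | ∃ a : Fin n → ℝ, (∀ i, 0 ≤ a i) ∧ M a ≤ k ∧
      h = M a - ∑ i, a i} with hS1
  set S2 : Set ℝ := {x : ℝ | ∃ a : Fin n → ℝ, (∀ i, 0 ≤ a i) ∧ 0 < M a ∧
      x = 1 - (∑ i, a i) / M a} with hS2
  -- basic facts
  have hMnonneg : ∀ a : Fin n → ℝ, (∀ i, 0 ≤ a i) → 0 ≤ M a := by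
    intro a ha
    apply Finset.le_inf'
    intro ν hν
    exact Finset.sum_nonneg fun i _ => mul_nonneg (ha i) (Nat.cast_nonneg _)
  have hM0 : M (fun _ => 0) = 0 := by
    simp only [hM, zero_mul, Finset.sum_const_zero]
    exact Finset.inf'_const hF 0
  have h0S1 : (0 : ℝ) ∈ S1 := by
    refine ⟨fun _ => 0, fun i => le_rfl, ?_, ?_⟩ <;> rw [hM0]
    · exact hk.le
    · simp
  have hS2bdd : BddAbove S2 := by
    refine ⟨1, fun x hx => ?_⟩
    obtain ⟨a, ha, hm, rfl⟩ := hx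
    have : 0 ≤ (∑ i, a i) / M a :=
      div_nonneg (Finset.sum_nonneg fun i _ => ha i) hm.le
    linarith
  set L : ℝ := max 0 (sSup S2) with hL
  have hLnonneg : 0 ≤ L := le_max_left _ _
  -- every element of S1 is ≤ k * L
  have hS1le : ∀ h ∈ S1, h ≤ k * L := by
    intro h hh
    obtain ⟨a, ha, hmk, rfl⟩ := hh
    have hs : 0 ≤ ∑ i, a i := Finset.sum_nonneg fun i _ => ha i
    have hm0 : 0 ≤ M a := hMnonneg a ha
    rcases eq_or_lt_of_le hm0 with hm | hm
    · nlinarith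
    · have hx : (1 - (∑ i, a i) / M a) ∈ S2 := ⟨a, ha, hm, rfl⟩
      have hxle : 1 - (∑ i, a i) / M a ≤ L :=
        le_trans (le_csSup hS2bdd hx) (le_max_right _ _)
      have key : M a - ∑ i, a i = M a * (1 - (∑ i, a i) / M a) := by
        field_simp
      rw [key]
      rcases le_or_gt (1 - (∑ i, a i) / M a) 0 with hx0 | hx0
      · nlinarith
      · nlinarith
  have hS1bdd : BddAbove S1 := ⟨k * L, hS1le⟩
  have hsupS1nonneg : 0 ≤ sSup S1 := le_csSup hS1bdd h0S1
  apply le_antisymm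
  · exact Real.sSup_le hS1le (by positivity)
  · -- k * L ≤ sSup S1
    rw [← le_div_iff₀' hk]
    refine max_le (by positivity) ?_
    rcases Set.eq_empty_or_nonempty S2 with h2 | h2
    · rw [h2, Real.sSup_empty]; positivity
    · apply csSup_le h2
      intro x hx
      obtain ⟨a, ha, hm, rfl⟩ := hx
      rw [le_div_iff₀' hk]
      apply le_csSup hS1bdd
      -- scale a by t = k / M a
      set t : ℝ := k / M a with ht
      have htpos : 0 < t := div_pos hk hm
      refine ⟨fun i => t * a i, fun i => mul_nonneg htpos.le (ha i), ?_, ?_⟩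
      · have : M (fun i => t * a i) = t * M a := by
          simp only [hM, mul_assoc]
          rw [← inf'_mul_left_aux F hF _ t htpos.le]
          congr 1; funext ν; rw [Finset.mul_sum]
        rw [this, ht, div_mul_cancel₀ _ hm.ne']
      · have : M (fun i => t * a i) = t * M a := by
          simp only [hM, mul_assoc]
          rw [← inf'_mul_left_aux F hF _ t htpos.le]
          congr 1; funext ν; rw [Finset.mul_sum]
        rw [this, ← Finset.mul_sum, ht, div_mul_cancel₀ _ hm.ne']
        field_simp
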